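/- In the Weyl algebra W = k⟨d,p⟩/(dp − pd − 1) acting on k[v] (p = multiplication by v, d = d/dv, char k = 0), the elements x^q ((d+1)p)^l (1 − (d+1)p) for q, l ≥ 0 together with x^s(x − T(d+1)p) for s ≥ 0 are linearly independent over k[T] inside k[T,x]⊗W, as can be verified by applying them to 1 ∈ k[v] via the action (f(T,x)⊗α)_μ(h(T)⊗u) = f(−μ, T)h(T+μ)⊗α(u). -/

import Mathlib

open MvPolynomial TensorProduct

set_option maxHeartbeats 1000000

section Helpers

variable {k : Type*} [Field k]

private lemma li_monic (p : ℕ → Polynomial k) (hm : ∀ j, (p j).Monic)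
    (hdeg : ∀ j, (p j).natDegree = j) : LinearIndependent k p := by
  rw [linearIndependent_iff']
  intro t
  induction t using Finset.induction_on_max with
  | empty => intro g _ i hi; simp at hi
  | insert a s ha ih =>
    intro g hsum i hi
    have hnot : a ∉ s := fun h => lt_irrefl a (ha a h)
    have hga : g a = 0 := by
      have hc : g a * (p a).coeff a + ∑ j ∈ s, g j * (p j).coeff a = 0 := by
        have h2 := congrArg (fun q => Polynomial.coeff q a) hsum
        simpa [Finset.sum_insert hnot, Polynomial.finset_sum_coeff,
          Polynomial.coeff_smul, smul_eq_mul] using h2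
      rw [Finset.sum_eq_zero (fun j hj => ?_)] at hc
      · have h1 : (p a).coeff a = 1 := by
          have := (hm a).coeff_natDegree
          rwa [hdeg a] at this
        simpa [h1] using hc
      · have hlt : (p j).natDegree < a := by rw [hdeg j]; exact ha j hj
        simp [Polynomial.coeff_eq_zero_of_natDegree_lt hlt]
    have hs : ∑ j ∈ s, g j • p j = 0 := by
      have h3 := hsum
      rw [Finset.sum_insert hnot, hga, zero_smul, zero_add] at h3
      exact h3
    rcases Finset.mem_insert.mp hi with h | h
    · exact h ▸ hga
    · exact ih g hs i h

private lemma Qpow_monic (Q : Module.End k (Polynomial k))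
    (hQ : ∀ f : Polynomial k, Q f = Polynomial.derivative (Polynomial.X * f) + Polynomial.X * f) :
    ∀ j, ((Q ^ j) (1 : Polynomial k)).Monic ∧ ((Q ^ j) (1 : Polynomial k)).natDegree = j := by
  intro j
  induction j with
  | zero => simp [Polynomial.monic_one]
  | succ n ih =>
    have happ : (Q ^ (n + 1)) (1 : Polynomial k) = Q ((Q ^ n) 1) := by
      rw [pow_succ', Module.End.mul_apply]
    set g : Polynomial k := (Q ^ n) 1 with hg
    have hmon : (Polynomial.X * g).Monic := Polynomial.monic_X.mul ih.1
    have hdeg : (Polynomial.X * g).natDegree = n + 1 := by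
      rw [Polynomial.monic_X.natDegree_mul ih.1, Polynomial.natDegree_X, ih.2, add_comm]
    have hne : Polynomial.X * g ≠ 0 := hmon.ne_zero
    have hlt : (Polynomial.derivative (Polynomial.X * g)).degree < (Polynomial.X * g).degree :=
      Polynomial.degree_derivative_lt hne
    constructor
    · rw [happ, hQ]
      exact hmon.add_of_right hlt
    · rw [happ, hQ]
      have hdeq : (Polynomial.derivative (Polynomial.X * g) + Polynomial.X * g).degree
          = (Polynomial.X * g).degree := Polynomial.degree_add_eq_right_of_degree_lt hlt
      have : (Polynomial.derivative (Polynomial.X * g) + Polynomial.X * g).degree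
          = ((n + 1 : ℕ) : WithBot ℕ) := by
        rw [hdeq, Polynomial.degree_eq_natDegree hne, hdeg]
      exact Polynomial.natDegree_eq_of_degree_eq_some this

private lemma exists_dual {V : Type*} [AddCommGroup V] [Module k V] {e : ℕ → V}
    (he : LinearIndependent k e) (m : ℕ) :
    ∃ φ : V →ₗ[k] k, ∀ j, φ (e j) = if j = m then 1 else 0 := by
  obtain ⟨W', hW'⟩ := Submodule.exists_isCompl (Submodule.span k (Set.range e))
  refine ⟨((Module.Basis.span he).coord m).comp (Submodule.projectionOnto _ _ hW'), fun j => ?_⟩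
  have h1 : e j = ((Module.Basis.span he j : Submodule.span k (Set.range e)) : V) :=
    congrArg Subtype.val (Module.Basis.span_apply he j).symm
  rw [LinearMap.comp_apply, h1, Submodule.projectionOnto_apply_left,
    Module.Basis.coord_apply, Module.Basis.repr_self, Finsupp.single_apply]

private lemma collapse {α β γ : Type*} [DecidableEq α] [AddCommMonoid β] [AddCommMonoid γ]
    (F : α →₀ β) (a : α) (f : α → β → γ) (hf : f a 0 = 0) :
    (F.sum fun x y => if a = x then f x y else 0) = f a (F a) := by
  classical
  rw [Finsupp.sum_ite_eq]
  split_ifs with h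
  · rfl
  · rw [Finsupp.notMem_support_iff.mp h, hf]

private lemma single_add_eq_iff (i n j s : ℕ) :
    (Finsupp.single (0 : Fin 2) j + Finsupp.single (1 : Fin 2) s
      = Finsupp.single (0 : Fin 2) i + Finsupp.single (1 : Fin 2) n) ↔ (j = i ∧ s = n) := by
  constructor
  · intro h
    constructor
    · have := DFunLike.congr_fun h (0 : Fin 2)
      simpa [Finsupp.single_apply] using this
    · have := DFunLike.congr_fun h (1 : Fin 2)
      simpa [Finsupp.single_apply] using this
  · rintro ⟨rfl, rfl⟩; rfl

private lemma coeff_key (h : Polynomial k) (i s n : ℕ) :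
    MvPolynomial.coeff (Finsupp.single 0 i + Finsupp.single 1 n)
      ((Polynomial.aeval (X 0 : MvPolynomial (Fin 2) k)) h * X 1 ^ s)
    = if n = s then h.coeff i else 0 := by
  induction h using Polynomial.induction_on' with
  | add p q hp hq =>
    rw [map_add, add_mul, MvPolynomial.coeff_add, hp, hq, Polynomial.coeff_add]
    split_ifs <;> simp
  | monomial j a =>
    rw [Polynomial.aeval_monomial]
    have e1 : (algebraMap k (MvPolynomial (Fin 2) k)) a * (X 0 : MvPolynomial (Fin 2) k) ^ j
        * X 1 ^ s = monomial (Finsupp.single 0 j + Finsupp.single 1 s) a := by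
      rw [MvPolynomial.X_pow_eq_monomial, MvPolynomial.X_pow_eq_monomial]
      rw [MvPolynomial.algebraMap_eq, MvPolynomial.C_mul_monomial, MvPolynomial.monomial_mul]
      simp
    rw [e1, MvPolynomial.coeff_monomial, Polynomial.coeff_monomial]
    by_cases h1 : n = s
    · subst h1
      by_cases h2 : j = i
      · subst h2; simp [single_add_eq_iff]
      · rw [if_neg (fun hc => h2 ((single_add_eq_iff i n j n).mp hc).1), if_pos rfl, if_neg h2]
    · rw [if_neg (fun hc => h1 ((single_add_eq_iff i n j s).mp hc).2.symm), if_neg h1]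

private lemma finsupp_sum_zero' {α β γ : Type*} [Zero β] [AddCommMonoid γ] {f : α →₀ β} :
    (f.sum fun _ _ => (0 : γ)) = 0 := Finset.sum_const_zero

end Helpers


/-- in `k[T,x] ⊗ W`, where `W` is the Weyl algebra realized as
operators on `k[v]` (`p` = multiplication by `v`, `d = d/dv`, char `k` = 0),
the elements `x^q ((d+1)p)^l (1 − (d+1)p)` (`q, l ≥ 0`) together with
`x^s (x − T(d+1)p)` (`s ≥ 0`) are linearly independent over `k[T]`.
We work in `S = k[T,x]` (`X 0 = T`, `X 1 = x`). -/
theorem stmt_17 {k : Type*} [Field k] [CharZero k]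
    (dW pW Q : Module.End k (Polynomial k))
    (hd : dW = Polynomial.derivative)
    (hp : pW = LinearMap.mulLeft k (Polynomial.X : Polynomial k))
    (hQ : Q = (dW + 1) * pW)
    (toS : Polynomial k →ₐ[k] MvPolynomial (Fin 2) k)
    (htoS : toS = Polynomial.aeval (X 0))
    -- the two families of elements of k[T,x] ⊗ W
    (u : ℕ → MvPolynomial (Fin 2) k ⊗[k] Module.End k (Polynomial k))
    (hu : ∀ s, u s
      = (X 1 ^ (s + 1) : MvPolynomial (Fin 2) k)
          ⊗ₜ[k] (1 : Module.End k (Polynomial k))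
        - (X 1 ^ s * X 0 : MvPolynomial (Fin 2) k) ⊗ₜ[k] Q)
    (w : ℕ × ℕ → MvPolynomial (Fin 2) k ⊗[k] Module.End k (Polynomial k))
    (hw : ∀ ql : ℕ × ℕ, w ql
      = (X 1 ^ ql.1 : MvPolynomial (Fin 2) k) ⊗ₜ[k] (Q ^ ql.2 * (1 - Q))) :
    -- k[T]-linear independence of the combined family
    ∀ (F : ℕ →₀ Polynomial k) (G : ℕ × ℕ →₀ Polynomial k),
      F.sum (fun s h =>
          ((toS h) ⊗ₜ[k] (1 : Module.End k (Polynomial k))) * u s)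
        + G.sum (fun ql h =>
          ((toS h) ⊗ₜ[k] (1 : Module.End k (Polynomial k))) * w ql) = 0
      → F = 0 ∧ G = 0 := by
  intro F G hFG
  classical
  -- basic facts about Q
  have hQapp : ∀ f : Polynomial k,
      Q f = Polynomial.derivative (Polynomial.X * f) + Polynomial.X * f := by
    intro f
    rw [hQ, Module.End.mul_apply, LinearMap.add_apply, Module.End.one_apply, hd, hp,
      LinearMap.mulLeft_apply]
  have hQj := Qpow_monic Q hQapp
  have he : LinearIndependent k (fun j : ℕ => (Q ^ j : Module.End k (Polynomial k))) := by
    have h1 : LinearIndependent k (fun j : ℕ => (Q ^ j) (1 : Polynomial k)) :=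
      li_monic _ (fun j => (hQj j).1) (fun j => (hQj j).2)
    exact LinearIndependent.of_comp (LinearMap.applyₗ (1 : Polynomial k)) h1
  -- coordinate functionals on the tensor product
  have hpsi : ∀ m : ℕ, ∃ ψ : (MvPolynomial (Fin 2) k ⊗[k] Module.End k (Polynomial k))
        →ₗ[k] MvPolynomial (Fin 2) k,
      ∀ (a : MvPolynomial (Fin 2) k) (j : ℕ),
        ψ (a ⊗ₜ[k] (Q ^ j)) = if j = m then a else 0 := by
    intro m
    obtain ⟨φ, hφ⟩ := exists_dual he m
    refine ⟨(TensorProduct.rid k (MvPolynomial (Fin 2) k)).toLinearMap.comp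
      (LinearMap.lTensor _ φ), fun a j => ?_⟩
    rw [LinearMap.comp_apply, LinearMap.lTensor_tmul, LinearEquiv.coe_coe,
      TensorProduct.rid_tmul, hφ j]
    split_ifs <;> simp
  choose ψ hψ using hpsi
  -- expanding the products
  have term_u : ∀ (s : ℕ) (h : Polynomial k),
      ((toS h) ⊗ₜ[k] (1 : Module.End k (Polynomial k))) * u s
      = (toS h * X 1 ^ (s + 1)) ⊗ₜ[k] (Q ^ 0) - (toS h * (X 1 ^ s * X 0)) ⊗ₜ[k] (Q ^ 1) := by
    intro s h
    rw [hu, mul_sub (toS h ⊗ₜ[k] (1 : Module.End k (Polynomial k)))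
        ((X 1 ^ (s + 1) : MvPolynomial (Fin 2) k) ⊗ₜ[k] (1 : Module.End k (Polynomial k)))
        ((X 1 ^ s * X 0 : MvPolynomial (Fin 2) k) ⊗ₜ[k] Q),
      Algebra.TensorProduct.tmul_mul_tmul, Algebra.TensorProduct.tmul_mul_tmul,
      one_mul, one_mul, pow_zero, pow_one]
  have term_w : ∀ (ql : ℕ × ℕ) (h : Polynomial k),
      ((toS h) ⊗ₜ[k] (1 : Module.End k (Polynomial k))) * w ql
      = (toS h * X 1 ^ ql.1) ⊗ₜ[k] (Q ^ ql.2) - (toS h * X 1 ^ ql.1) ⊗ₜ[k] (Q ^ (ql.2 + 1)) := by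
    intro ql h
    rw [hw, Algebra.TensorProduct.tmul_mul_tmul, one_mul, mul_one_sub, ← pow_succ,
      TensorProduct.tmul_sub]
  -- main family of scalar equations
  have EQ : ∀ m : ℕ,
      F.sum (fun s h => (if 0 = m then toS h * X 1 ^ (s + 1) else 0)
          - (if 1 = m then toS h * (X 1 ^ s * X 0) else 0))
        + G.sum (fun ql h => (if ql.2 = m then toS h * X 1 ^ ql.1 else 0)
          - (if ql.2 + 1 = m then toS h * X 1 ^ ql.1 else 0)) = 0 := by
    intro m
    have h0 := congrArg (ψ m) hFG
    rw [map_zero, map_add, map_finsuppSum, map_finsuppSum] at h0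
    have eF : (F.sum fun s h => (ψ m) ((toS h) ⊗ₜ[k] (1 : Module.End k (Polynomial k)) * u s))
        = F.sum (fun s h => (if 0 = m then toS h * X 1 ^ (s + 1) else 0)
          - (if 1 = m then toS h * (X 1 ^ s * X 0) else 0)) :=
      Finsupp.sum_congr (fun s _ => by rw [term_u, map_sub, hψ, hψ])
    have eG : (G.sum fun ql h => (ψ m) ((toS h) ⊗ₜ[k] (1 : Module.End k (Polynomial k)) * w ql))
        = G.sum (fun ql h => (if ql.2 = m then toS h * X 1 ^ ql.1 else 0)
          - (if ql.2 + 1 = m then toS h * X 1 ^ ql.1 else 0)) :=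
      Finsupp.sum_congr (fun ql _ => by rw [term_w, map_sub, hψ, hψ])
    rw [eF, eG] at h0
    exact h0
  -- abbreviations
  set AS : MvPolynomial (Fin 2) k := F.sum (fun s h => toS h * X 1 ^ (s + 1)) with hAS
  set BS : MvPolynomial (Fin 2) k := F.sum (fun s h => toS h * (X 1 ^ s * X 0)) with hBS
  set D : ℕ → MvPolynomial (Fin 2) k :=
    fun m => G.sum (fun ql h => if ql.2 = m then toS h * X 1 ^ ql.1 else 0) with hD
  -- specializations of EQ
  have EQ0 : AS + D 0 = 0 := by
    have h0 := EQ 0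
    have eF : F.sum (fun s h => (if 0 = 0 then toS h * X 1 ^ (s + 1) else 0)
          - (if 1 = 0 then toS h * (X 1 ^ s * X 0) else 0))
        = F.sum (fun s h => toS h * X 1 ^ (s + 1)) :=
      Finsupp.sum_congr (fun s _ => by norm_num)
    have eG : G.sum (fun ql h => (if ql.2 = 0 then toS h * X 1 ^ ql.1 else 0)
          - (if ql.2 + 1 = 0 then toS h * X 1 ^ ql.1 else 0))
        = G.sum (fun ql h => if ql.2 = 0 then toS h * X 1 ^ ql.1 else 0) :=
      Finsupp.sum_congr (fun ql _ => by rw [if_neg (show ¬(ql.2 + 1 = 0) by omega), sub_zero])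
    rw [eF, eG] at h0
    exact h0
  have EQ1 : (0 - BS) + (D 1 - D 0) = 0 := by
    have h0 := EQ 1
    have eF : F.sum (fun s h => (if 0 = 1 then toS h * X 1 ^ (s + 1) else 0)
          - (if 1 = 1 then toS h * (X 1 ^ s * X 0) else 0))
        = F.sum (fun s h => (0 : MvPolynomial (Fin 2) k) - toS h * (X 1 ^ s * X 0)) :=
      Finsupp.sum_congr (fun s _ => by norm_num)
    have eG : G.sum (fun ql h => (if ql.2 = 1 then toS h * X 1 ^ ql.1 else 0)
          - (if ql.2 + 1 = 1 then toS h * X 1 ^ ql.1 else 0))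
        = G.sum (fun ql h => (if ql.2 = 1 then toS h * X 1 ^ ql.1 else 0)
          - (if ql.2 = 0 then toS h * X 1 ^ ql.1 else 0)) :=
      Finsupp.sum_congr (fun ql _ => by
        congr 1
        by_cases hc : ql.2 = 0
        · rw [if_pos (show ql.2 + 1 = 1 by omega), if_pos hc]
        · rw [if_neg (show ¬(ql.2 + 1 = 1) by omega), if_neg hc])
    rw [eF, eG, Finsupp.sum_sub, Finsupp.sum_sub, finsupp_sum_zero'] at h0
    exact h0
  have EQstep : ∀ m : ℕ, D (m + 2) - D (m + 1) = 0 := by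
    intro m
    have h0 := EQ (m + 2)
    have eF : F.sum (fun s h => (if 0 = m + 2 then toS h * X 1 ^ (s + 1) else 0)
          - (if 1 = m + 2 then toS h * (X 1 ^ s * X 0) else 0))
        = F.sum (fun s h => (0 : MvPolynomial (Fin 2) k)) :=
      Finsupp.sum_congr (fun s _ => by
        rw [if_neg (show ¬(0 = m + 2) by omega), if_neg (show ¬(1 = m + 2) by omega), sub_zero])
    have eG : G.sum (fun ql h => (if ql.2 = m + 2 then toS h * X 1 ^ ql.1 else 0)
          - (if ql.2 + 1 = m + 2 then toS h * X 1 ^ ql.1 else 0))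
        = G.sum (fun ql h => (if ql.2 = m + 2 then toS h * X 1 ^ ql.1 else 0)
          - (if ql.2 = m + 1 then toS h * X 1 ^ ql.1 else 0)) :=
      Finsupp.sum_congr (fun ql _ => by
        congr 1
        by_cases hc : ql.2 = m + 1
        · rw [if_pos (show ql.2 + 1 = m + 2 by omega), if_pos hc]
        · rw [if_neg (show ¬(ql.2 + 1 = m + 2) by omega), if_neg hc])
    rw [eF, eG, Finsupp.sum_sub, finsupp_sum_zero', zero_add] at h0
    exact h0
  -- D vanishes in high degree
  set N : ℕ := (G.support.sup fun ql => ql.2) + 1 with hN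
  have hDN : ∀ m, N ≤ m → D m = 0 := by
    intro m hm
    show G.sum (fun ql h => if ql.2 = m then toS h * X 1 ^ ql.1 else 0) = 0
    refine (Finsupp.sum_congr (g2 := fun ql h => (0 : MvPolynomial (Fin 2) k))
      (fun ql hql => ?_)).trans finsupp_sum_zero'
    have hle : ql.2 ≤ G.support.sup fun ql => ql.2 := Finset.le_sup hql
    rw [if_neg (show ¬(ql.2 = m) by omega)]
  have hconst : ∀ (j m : ℕ), D (m + 1) = D (m + 1 + j) := by
    intro j
    induction j with
    | zero => intro m; rfl
    | succ n ih =>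
      intro m
      have h1 := EQstep (m + n)
      have h2 : D (m + n + 2) = D (m + n + 1) := by
        have := sub_eq_zero.mp h1
        exact this
      calc D (m + 1) = D (m + 1 + n) := ih m
        _ = D (m + n + 1) := by ring_nf
        _ = D (m + n + 2) := h2.symm
        _ = D (m + 1 + (n + 1)) := by ring_nf
  have hD1 : ∀ m, D (m + 1) = 0 := by
    intro m
    rw [hconst N m]
    exact hDN _ (by omega)
  have hD0 : D 0 = -BS := by
    have h := EQ1
    rw [hD1 0] at h
    linear_combination -h
  have hASBS : AS = BS := by
    linear_combination EQ0 - hD0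
  -- deduce F = 0
  subst htoS
  have hsum : ∀ {α : Type} (m : Fin 2 →₀ ℕ) (F' : α →₀ Polynomial k)
      (f : α → Polynomial k → MvPolynomial (Fin 2) k),
      MvPolynomial.coeff m (F'.sum f) = F'.sum (fun s h => MvPolynomial.coeff m (f s h)) := by
    intro α m F' f
    exact map_finsuppSum (MvPolynomial.lcoeff k m) F' f
  have hcF : ∀ (i n : ℕ),
      MvPolynomial.coeff (Finsupp.single 0 i + Finsupp.single 1 (n + 1)) AS
        = (F n).coeff i := by
    intro i n
    rw [hAS, hsum]
    have e1 : F.sum (fun s h => MvPolynomial.coeff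
          (Finsupp.single 0 i + Finsupp.single 1 (n + 1))
          ((Polynomial.aeval (X 0 : MvPolynomial (Fin 2) k)) h * X 1 ^ (s + 1)))
        = F.sum (fun s h => if n = s then h.coeff i else 0) :=
      Finsupp.sum_congr (fun s _ => by
        rw [coeff_key]
        by_cases hc : n = s
        · rw [if_pos (show n + 1 = s + 1 by omega), if_pos hc]
        · rw [if_neg (show ¬(n + 1 = s + 1) by omega), if_neg hc])
    rw [e1]
    exact collapse F n (fun _ h => h.coeff i) (by simp)
  have hBSrw : BS = F.sum (fun s h =>
      (Polynomial.aeval (X 0 : MvPolynomial (Fin 2) k)) (Polynomial.X * h) * X 1 ^ s) := by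
    rw [hBS]
    exact Finsupp.sum_congr (fun s _ => by rw [map_mul, Polynomial.aeval_X]; ring)
  have hcBS : ∀ (i n : ℕ),
      MvPolynomial.coeff (Finsupp.single 0 i + Finsupp.single 1 (n + 1)) BS
        = (Polynomial.X * F (n + 1)).coeff i := by
    intro i n
    rw [hBSrw, hsum]
    have e1 : F.sum (fun s h => MvPolynomial.coeff
          (Finsupp.single 0 i + Finsupp.single 1 (n + 1))
          ((Polynomial.aeval (X 0 : MvPolynomial (Fin 2) k)) (Polynomial.X * h) * X 1 ^ s))
        = F.sum (fun s h => if n + 1 = s then (Polynomial.X * h).coeff i else 0) :=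
      Finsupp.sum_congr (fun s _ => by rw [coeff_key])
    rw [e1]
    exact collapse F (n + 1) (fun _ h => (Polynomial.X * h).coeff i) (by simp)
  have hkey : ∀ n, F n = Polynomial.X * F (n + 1) := by
    intro n
    apply Polynomial.ext
    intro i
    have := congrArg (MvPolynomial.coeff (Finsupp.single 0 i + Finsupp.single 1 (n + 1))) hASBS
    rw [hcF, hcBS] at this
    exact this
  have hFiter : ∀ (j n : ℕ), F n = Polynomial.X ^ j * F (n + j) := by
    intro j
    induction j with
    | zero => intro n; simp
    | succ m ih =>
      intro n
      rw [ih n, hkey (n + m), ← mul_assoc, ← pow_succ]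
      congr 1
  have hFn : ∀ n, F n = 0 := by
    intro n
    set M : ℕ := F.support.sup id + 1 with hM
    have hFM : F (n + M) = 0 := by
      by_contra hne
      have : n + M ∈ F.support := Finsupp.mem_support_iff.mpr hne
      have := Finset.le_sup (f := id) this
      simp only [id] at this
      omega
    rw [hFiter M n, hFM, mul_zero]
  have hF0 : F = 0 := by
    ext n
    simp [hFn n]
  -- deduce G = 0
  have hBS0 : BS = 0 := by
    rw [hBS, hF0]
    exact Finsupp.sum_zero_index
  have hDall : ∀ m, D m = 0 := by
    intro m
    cases m with
    | zero => rw [hD0, hBS0, neg_zero]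
    | succ n => exact hD1 n
  have hG0 : G = 0 := by
    have hGql : ∀ ql : ℕ × ℕ, G ql = 0 := by
      intro ql
      apply Polynomial.ext
      intro i
      have h0 := congrArg
        (MvPolynomial.coeff (Finsupp.single 0 i + Finsupp.single 1 ql.1)) (hDall ql.2)
      rw [hD, hsum] at h0
      have e1 : G.sum (fun ab h => MvPolynomial.coeff
            (Finsupp.single 0 i + Finsupp.single 1 ql.1)
            (if ab.2 = ql.2 then (Polynomial.aeval (X 0 : MvPolynomial (Fin 2) k)) h * X 1 ^ ab.1
              else 0))
          = G.sum (fun ab h => if ql = ab then h.coeff i else 0) :=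
        Finsupp.sum_congr (fun ab _ => by
          by_cases hc : ql = ab
          · subst hc
            rw [if_pos rfl, if_pos rfl, coeff_key, if_pos rfl]
          · rw [if_neg hc]
            by_cases hc2 : ab.2 = ql.2
            · rw [if_pos hc2, coeff_key, if_neg (fun hq => hc (Prod.ext hq hc2.symm))]
            · rw [if_neg hc2, MvPolynomial.coeff_zero])
      rw [e1, collapse G ql (fun _ h => h.coeff i) (by simp)] at h0
      simpa using h0
    exact Finsupp.ext fun ql => (hGql ql).trans Finsupp.zero_apply.symm
  exact ⟨hF0, hG0⟩
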